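/- Let A_Z be a finite-dimensional factor with subfactors A_AB, A_BC, A_B satisfying the commuting square condition. For every state ψ on A_Z, equality holds in the strong subadditivity inequality, i.e. Ŝ(ψ) − Ŝ(ψ|_{A_AB}) − Ŝ(ψ|_{A_BC}) + Ŝ(ψ|_{A_B}) = 0, if and only if H(ρ_ψ, ρ_{ψ|_{A_BC}}) = H(ρ_{ψ|_{A_AB}}, ρ_{ψ|_{A_B}}), equivalently H(ψ, ψ ∘ E_BC) = H(ψ ∘ E_AB, ψ ∘ E_B). -/

import Mathlib

open scoped ComplexOrder

/-- The full matrix algebra `M_N(ℂ)`, our model of a finite-dimensional factor. -/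
abbrev Mat (N : ℕ) := Matrix (Fin N) (Fin N) ℂ

variable {N : ℕ}

/-- The tracial state `τ` on `Mat N`. -/
noncomputable def tau (x : Mat N) : ℂ := x.trace / N

/-- Matrix logarithm via the continuous functional calculus. -/
noncomputable def mlog (x : Mat N) : Mat N := cfc Real.log x

/-- Matrix square root via the continuous functional calculus. -/
noncomputable def msqrt (x : Mat N) : Mat N := cfc Real.sqrt x

/-- Matrix inverse square root via the continuous functional calculus. -/
noncomputable def misqrt (x : Mat N) : Mat N := cfc (fun t : ℝ => (Real.sqrt t)⁻¹) x

/-- The entropy `Ŝ(ψ) = -ψ(log ρ_ψ) = -τ(ρ log ρ)` of the state with τ-density `ρ`. -/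
noncomputable def Shat (ρ : Mat N) : ℝ := -(tau (ρ * mlog ρ)).re

/-- The von Neumann entropy `S(ψ|_B) = -Tr_B(D log D) = Ŝ(ψ|_B) + log k` of the
restriction of a state to a subfactor `B ≅ M_k`, expressed through the τ-density `ρ`
of the restriction and the matrix size `k` of the subfactor. -/
noncomputable def Sres (ρ : Mat N) (k : ℕ) : ℝ := Shat ρ + Real.log k

/-- `ρ` is the density with respect to the tracial state `τ` of a state of `Mat N`. -/
def IsTauDensity (ρ : Mat N) : Prop := ρ.PosSemidef ∧ tau ρ = 1

/-- `E` is the τ-preserving conditional expectation onto the unital *-subalgebra `B`: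
it maps into `B`, fixes `B` pointwise, and `Tr(b x) = Tr(b (E x))` for all `b ∈ B`.
These properties determine `E` uniquely. -/
def IsCondExp (B : StarSubalgebra ℂ (Mat N)) (E : Mat N →ₗ[ℂ] Mat N) : Prop :=
  (∀ x, E x ∈ B) ∧ (∀ b ∈ B, E b = b) ∧
    (∀ x : Mat N, ∀ b ∈ B, (b * x).trace = (b * E x).trace)

/-- `B` is a subfactor: its relative center is trivial (so `B` is a full matrix algebra). -/
def IsFactorSub (B : StarSubalgebra ℂ (Mat N)) : Prop :=
  ∀ x ∈ B, (∀ y ∈ B, x * y = y * x) → ∃ c : ℂ, x = c • (1 : Mat N)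

/-- The commuting square condition: `B = AB ⊓ BC` and `E_AB ∘ E_BC = E_BC ∘ E_AB = E_B`. -/
def CommSquare (AB BC B : StarSubalgebra ℂ (Mat N))
    (EAB EBC EB : Mat N →ₗ[ℂ] Mat N) : Prop :=
  IsCondExp AB EAB ∧ IsCondExp BC EBC ∧ IsCondExp B EB ∧
    B = AB ⊓ BC ∧ (∀ x, EAB (EBC x) = EB x) ∧ (∀ x, EBC (EAB x) = EB x)

open Classical in
/-- Relative entropy `H(ρ₁, ρ₂) = τ(ρ₁ (log ρ₁ - log ρ₂))` of two τ-densities, equal to `+∞`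
unless the support of `ρ₁` is dominated by the support of `ρ₂` (for positive semidefinite
matrices the support condition is the inclusion of kernels `ker ρ₂ ⊆ ker ρ₁`). -/
noncomputable def relEnt (ρ₁ ρ₂ : Mat N) : EReal :=
  if ∀ v : Fin N → ℂ, ρ₂.mulVec v = 0 → ρ₁.mulVec v = 0 then
    (((tau (ρ₁ * (mlog ρ₁ - mlog ρ₂))).re : ℝ) : EReal)
  else ⊤

/-- Complete positivity of a linear map on `Mat N`. -/
def IsCP (E : Mat N →ₗ[ℂ] Mat N) : Prop :=
  ∀ (k : ℕ) (x a : Fin k → Mat N),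
    (∑ i, ∑ j, star (a i) * E (star (x i) * x j) * a j).PosSemidef

/-- `p` is a minimal projection of the subalgebra `B`. -/
def IsMinProj (B : StarSubalgebra ℂ (Mat N)) (p : Mat N) : Prop :=
  p ∈ B ∧ p.IsHermitian ∧ p * p = p ∧ p ≠ 0 ∧
    ∀ q ∈ B, q.IsHermitian → q * q = q → q * p = q → q = 0 ∨ q = p

/-- The subfactor `B` of `Mat N` has matrix size `k` (i.e. `B ≅ M_k`) in the sense that its
minimal projections have ambient matrix trace `N / k`; this encodes the assumption that the
ambient matrix trace restricts on `B` to `N/k` times the canonical matrix trace of `B`. -/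
def HasMatSize (B : StarSubalgebra ℂ (Mat N)) (k : ℕ) : Prop :=
  ∀ p, IsMinProj B p → Matrix.trace p = ((N : ℂ) / k)

/-- `Θ` is a grading: an involutive *-automorphism. -/
def IsGrading (Θ : Mat N ≃⋆ₐ[ℂ] Mat N) : Prop := ∀ x, Θ (Θ x) = x

/-- The subalgebra `A` is invariant under the grading. -/
def ThetaInvariant (Θ : Mat N ≃⋆ₐ[ℂ] Mat N) (A : StarSubalgebra ℂ (Mat N)) : Prop :=
  ∀ x ∈ A, Θ x ∈ A

/-- Graded commutation relations between (the subalgebras of) two disjoint regions: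
even elements of one commute with all elements of the other, odd elements anticommute. -/
def GradedComm (Θ : Mat N ≃⋆ₐ[ℂ] Mat N) (A C : StarSubalgebra ℂ (Mat N)) : Prop :=
  ∀ x ∈ A, ∀ y ∈ C,
    ((Θ x = x ∨ Θ y = y) → x * y = y * x) ∧
      (Θ x = -x → Θ y = -y → x * y + y * x = 0)

/-- `ω` is a state (positive normalized linear functional). -/
def IsState (ω : Mat N →ₗ[ℂ] ℂ) : Prop :=
  ω 1 = 1 ∧ ∀ x : Mat N, 0 ≤ ω (star x * x)

/-- Markov property of the state `ω` with respect to a triplet with first algebra `AA` and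
pair algebra `AB`: there is a quasi-conditional expectation (a completely positive map into
`AB` which is a module map over `AA`) fixing `AA` pointwise and preserving `ω`. -/
def IsMarkovState (AA AB : StarSubalgebra ℂ (Mat N)) (ω : Mat N →ₗ[ℂ] ℂ) : Prop :=
  ∃ E : Mat N →ₗ[ℂ] Mat N, IsCP E ∧ (∀ x, E x ∈ AB) ∧
    (∀ c ∈ AA, ∀ x, E (c * x) = c * E x) ∧ (∀ c ∈ AA, E c = c) ∧
    ∀ x, ω (E x) = ω x

/-- Markov property, formulated for the state with τ-density `ρ`. -/
def IsMarkovDensity (AA AB : StarSubalgebra ℂ (Mat N)) (ρ : Mat N) : Prop :=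
  ∃ E : Mat N →ₗ[ℂ] Mat N, IsCP E ∧ (∀ x, E x ∈ AB) ∧
    (∀ c ∈ AA, ∀ x, E (c * x) = c * E x) ∧ (∀ c ∈ AA, E c = c) ∧
    ∀ x, tau (ρ * E x) = tau (ρ * x)

/-- The restriction of `ω` to the subalgebra generated by `AA` and `AC` is separable:
a convex combination of product states for the pair `(AA, AC)`. -/
def SeparableOn (AA AC : StarSubalgebra ℂ (Mat N)) (ω : Mat N →ₗ[ℂ] ℂ) : Prop :=
  ∃ (n : ℕ) (lam : Fin n → ℝ) (ωi : Fin n → (Mat N →ₗ[ℂ] ℂ)),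
    (∀ i, 0 ≤ lam i) ∧ (∑ i, lam i = 1) ∧ (∀ i, IsState (ωi i)) ∧
    (∀ i, ∀ x ∈ AA, ∀ y ∈ AC, ωi i (x * y) = ωi i x * ωi i y) ∧
    ∀ z ∈ (AA ⊔ AC : StarSubalgebra ℂ (Mat N)), ω z = ∑ i, (lam i : ℂ) * ωi i z

/-- The conditional expectation `E` is sufficient for the pair of states with τ-densities
`ρ₁, ρ₂`: some completely positive trace-preserving (recovery) map `T` recovers the densities
from their compressions `E ρ₁`, `E ρ₂` (recall that the τ-density of `ψ ∘ E` is `E ρ_ψ`). -/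
def IsSufficient (E : Mat N →ₗ[ℂ] Mat N) (ρ₁ ρ₂ : Mat N) : Prop :=
  ∃ T : Mat N →ₗ[ℂ] Mat N, IsCP T ∧ (∀ x, (T x).trace = x.trace) ∧
    T (E ρ₁) = ρ₁ ∧ T (E ρ₂) = ρ₂

/-- for a commuting square of finite-dimensional factors and any state `ψ`
with τ-density `ρ`, equality holds in strong subadditivity
`Ŝ(ψ) − Ŝ(ψ|_AB) − Ŝ(ψ|_BC) + Ŝ(ψ|_B) = 0` if and only if
`H(ρ_ψ, ρ_{ψ|BC}) = H(ρ_{ψ|AB}, ρ_{ψ|B})`, i.e. `H(ψ, ψ∘E_BC) = H(ψ∘E_AB, ψ∘E_B)`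
(the τ-densities of `ψ|_X` and of `ψ ∘ E_X` both being `E_X ρ`). -/

lemma myContOn (f : ℝ → ℝ) (A : Mat N) :
    ContinuousOn f (spectrum ℝ A) :=
  (Matrix.finite_real_spectrum : (spectrum ℝ A).Finite).continuousOn f

lemma aeval_mem (S : StarSubalgebra ℂ (Mat N)) {x : Mat N} (hx : x ∈ S) (p : Polynomial ℝ) :
    Polynomial.aeval x p ∈ S := by
  induction p using Polynomial.induction_on' with
  | add p q hp hq => rw [map_add]; exact add_mem hp hq
  | monomial n c =>
    rw [Polynomial.aeval_monomial]
    exact mul_mem (by simpa [Algebra.algebraMap_eq_smul_one] using S.smul_mem (S.one_mem) ((c:ℂ))) (pow_mem hx n)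

lemma cfc_mem_sub (S : StarSubalgebra ℂ (Mat N)) {x : Mat N} (hx : x ∈ S) (f : ℝ → ℝ) :
    cfc f x ∈ S := by
  by_cases hsa : IsSelfAdjoint x
  · have hherm : x.IsHermitian := hsa
    have hfin : (spectrum ℝ x).Finite := Matrix.finite_real_spectrum
    set F := hfin.toFinset with hF
    have hinj : Set.InjOn (id : ℝ → ℝ) F := Function.injective_id.injOn
    set p := Lagrange.interpolate F id f with hp
    have heq : cfc f x = cfc p.eval x := by
      apply cfc_congr
      intro t ht
      have htF : t ∈ F := hfin.mem_toFinset.mpr ht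
      simpa [hp] using (Lagrange.eval_interpolate_at_node f hinj htF).symm
    rw [heq, cfc_polynomial p x hsa]
    exact aeval_mem S hx p
  · rw [cfc_apply_of_not_predicate x hsa]; exact zero_mem S

lemma cfc_mulVec_of_kernel {A : Mat N} (hA : IsSelfAdjoint A) (f : ℝ → ℝ)
    {v : Fin N → ℂ} (hv : A.mulVec v = 0) :
    (cfc f A).mulVec v = (f 0 : ℂ) • v := by
  classical
  set g : ℝ → ℝ := fun t => if t = 0 then 0 else (f t - f 0)/t with hg
  have hfg : f = fun t => g t * t + f 0 := by
    funext t
    by_cases h : t = 0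
    · simp [hg, h]
    · simp only [hg, if_neg h]
      rw [div_mul_cancel₀ _ h]; ring
  have h1 : cfc f A = cfc g A * A + algebraMap ℝ (Mat N) (f 0) := by
    conv_lhs => rw [hfg]
    rw [cfc_add (a := A) (fun t => g t * t) (fun _ => f 0) (myContOn _ _) (myContOn _ _),
      cfc_mul g (fun t => t) A (myContOn _ _) (myContOn _ _), cfc_id' ℝ A, cfc_const (f 0) A]
  rw [h1, Matrix.add_mulVec, ← Matrix.mulVec_mulVec, hv]
  simp [Algebra.algebraMap_eq_smul_one, Matrix.smul_mulVec]

lemma trace_ct_self_eq_zero {A : Mat N} (h : (A.conjTranspose * A).trace = 0) : A = 0 := by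
  classical
  have h2 : ∑ i, ∑ j, Complex.normSq (A j i) = 0 := by
    have := congrArg Complex.re h
    simpa [Matrix.trace, Matrix.diag, Matrix.mul_apply, Matrix.conjTranspose_apply,
      Complex.normSq_eq_conj_mul_self, Complex.re_sum, Complex.normSq_apply] using this
  have h3 : ∀ i ∈ Finset.univ, ∀ j ∈ Finset.univ, Complex.normSq (A j i) = 0 := by
    have h4 := (Finset.sum_eq_zero_iff_of_nonneg (fun i _ =>
      Finset.sum_nonneg fun j _ => Complex.normSq_nonneg _)).mp h2
    intro i _ j _
    exact (Finset.sum_eq_zero_iff_of_nonneg (fun j _ => Complex.normSq_nonneg _)).mp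
      (h4 i (Finset.mem_univ i)) j (Finset.mem_univ j)
  ext j i
  simpa using Complex.normSq_eq_zero.mp (h3 i (Finset.mem_univ i) j (Finset.mem_univ j))

lemma psd_trace_nonneg {A : Mat N} (hA : A.PosSemidef) : 0 ≤ A.trace := by
  classical
  apply Finset.sum_nonneg
  intro i _
  exact hA.diag_nonneg

lemma psd_trace_zero {A : Mat N} (hA : A.PosSemidef) (h : A.trace = 0) : A = 0 := by
  exact hA.trace_eq_zero_iff.mp h

lemma cfc_posSemidef {A : Mat N} (hA : IsSelfAdjoint A) (f : ℝ → ℝ) (hf : ∀ t, 0 ≤ f t) :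
    (cfc f A).PosSemidef := by
  have hherm : A.IsHermitian := hA
  rw [hherm.cfc_eq]
  unfold Matrix.IsHermitian.cfc
  have hd : Matrix.PosSemidef (Matrix.diagonal (RCLike.ofReal ∘ f ∘ hherm.eigenvalues) : Mat N) :=
    Matrix.PosSemidef.diagonal fun i => by
      simpa using Complex.zero_le_real.mpr (hf _)
  simpa [Matrix.star_eq_conjTranspose] using hd.mul_mul_conjTranspose_same (hherm.eigenvectorUnitary : Mat N)

-- new material
section CondExp
variable {S : StarSubalgebra ℂ (Mat N)} {E : Mat N →ₗ[ℂ] Mat N}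

lemma condExp_unique (hE : IsCondExp S E) {y z : Mat N} (hy : y ∈ S) (hz : z ∈ S)
    (h : ∀ b ∈ S, (b * y).trace = (b * z).trace) : y = z := by
  have hd : (y - z) ∈ S := sub_mem hy hz
  have h0 : ∀ b ∈ S, (b * (y - z)).trace = 0 := by
    intro b hb
    rw [mul_sub, Matrix.trace_sub, h b hb, sub_self]
  have := h0 (star (y - z)) (star_mem hd)
  exact sub_eq_zero.mp (trace_ct_self_eq_zero this)

lemma condExp_star (hE : IsCondExp S E) (x : Mat N) : E (star x) = star (E x) := by
  apply condExp_unique hE (hE.1 _) (star_mem (hE.1 x))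
  intro b hb
  rw [← hE.2.2 (star x) b hb]
  have key : (b * star x).trace = (b * star (E x)).trace := by
    have h1 : (b * star x).trace = star ((x * star b).trace) := by
      rw [← Matrix.trace_conjTranspose]
      congr 1
      simp [Matrix.star_eq_conjTranspose, Matrix.conjTranspose_mul]
    have h2 : (b * star (E x)).trace = star ((E x * star b).trace) := by
      rw [← Matrix.trace_conjTranspose]
      congr 1
      simp [Matrix.star_eq_conjTranspose, Matrix.conjTranspose_mul]
    rw [h1, h2, Matrix.trace_mul_comm x (star b), Matrix.trace_mul_comm (E x) (star b),
      hE.2.2 x (star b) (star_mem hb)]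
  rw [key]

lemma condExp_selfAdjoint (hE : IsCondExp S E) {σ : Mat N} (hσ : σ.IsHermitian) :
    IsSelfAdjoint (E σ) := by
  have : star (E σ) = E (star σ) := (condExp_star hE σ).symm
  rw [IsSelfAdjoint, this]
  congr 1

lemma cfc_mul_self_of_idem {A : Mat N} (f : ℝ → ℝ) (hf : ∀ t, f t * f t = f t) :
    cfc f A * cfc f A = cfc f A := by
  rw [← cfc_mul f f A (myContOn _ _) (myContOn _ _)]
  exact cfc_congr fun t _ => hf t

lemma condExp_trace_q {σ q : Mat N} (hσ : σ.PosSemidef) (hq : IsSelfAdjoint q)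
    (hqq : q * q = q) : 0 ≤ (q * σ).trace := by
  have h1 : (q * σ * q.conjTranspose).PosSemidef := hσ.mul_mul_conjTranspose_same q
  have hqc : q.conjTranspose = q := hq
  have h2 : (q * σ * q.conjTranspose).trace = (q * σ).trace := by
    rw [hqc, Matrix.trace_mul_comm, ← mul_assoc, hqq]
  rw [← h2]
  exact psd_trace_nonneg h1

lemma condExp_posSemidef (hE : IsCondExp S E) {σ : Mat N} (hσ : σ.PosSemidef) :
    (E σ).PosSemidef := by
  classical
  have hsa : IsSelfAdjoint (E σ) := condExp_selfAdjoint hE hσ.1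
  set ind : ℝ → ℝ := fun t => if t < 0 then 1 else 0 with hind
  set q := cfc ind (E σ) with hqdef
  have hqS : q ∈ S := cfc_mem_sub S (hE.1 σ) ind
  have hqsa : IsSelfAdjoint q := cfc_predicate (R := ℝ) ind (E σ)
  have hqq : q * q = q := cfc_mul_self_of_idem ind fun t => by by_cases h : t < 0 <;> simp [hind, h]
  set m := cfc (fun t : ℝ => min t 0) (E σ) with hmdef
  have h1 : cfc (fun t : ℝ => ind t * t) (E σ) = q * E σ := by
    rw [cfc_mul ind (fun x => x) (E σ) (myContOn _ _) (myContOn _ _), cfc_id' ℝ (E σ)]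
  have hmq : m = q * E σ := by
    rw [hmdef, ← h1]
    refine cfc_congr (R := ℝ) fun t _ => ?_
    by_cases h : t < 0
    · simp [hind, h, min_eq_left (le_of_lt h)]
    · simp [hind, h, min_eq_right (not_lt.mp h)]
  have hmneg : (-m).PosSemidef := by
    have hh : (-m) = cfc (fun t : ℝ => -(min t 0)) (E σ) := by
      rw [hmdef, cfc_neg (f := fun t : ℝ => min t 0) (a := E σ)]
    rw [hh]
    exact cfc_posSemidef hsa _ fun t => neg_nonneg.mpr (min_le_right t 0)
  have htr : m.trace = (q * σ).trace := by
    rw [hmq, ← hE.2.2 σ q hqS]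
  have htr0 : m.trace = 0 := by
    have h1 : 0 ≤ m.trace := htr ▸ condExp_trace_q hσ hqsa hqq
    have h2 : 0 ≤ (-m).trace := psd_trace_nonneg hmneg
    rw [Matrix.trace_neg, neg_nonneg] at h2
    exact le_antisymm h2 h1
  have hm0 : m = 0 := by
    have := psd_trace_zero hmneg (by rw [Matrix.trace_neg, htr0, neg_zero])
    simpa [neg_eq_zero] using this
  have hEdecomp : E σ = cfc (fun t : ℝ => max t 0) (E σ) + m := by
    rw [hmdef, ← cfc_add (a := E σ) (fun t : ℝ => max t 0) (fun t : ℝ => min t 0)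
      (myContOn _ _) (myContOn _ _)]
    have hid : cfc (fun t : ℝ => max t 0 + min t 0) (E σ) = E σ := by
      have : (fun t : ℝ => max t 0 + min t 0) = fun t : ℝ => t := by
        funext t; rcases le_total t 0 with h | h <;>
          simp [max_eq_left, max_eq_right, min_eq_left, min_eq_right, h]
      rw [this, cfc_id' ℝ (E σ)]
    rw [hid]
  rw [hEdecomp, hm0, add_zero]
  exact cfc_posSemidef hsa _ fun t => le_max_right t 0

end CondExp

section CondExp2
variable {S : StarSubalgebra ℂ (Mat N)} {E : Mat N →ₗ[ℂ] Mat N}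

lemma condExp_kernel (hE : IsCondExp S E) {σ : Mat N} (hσ : σ.PosSemidef)
    {v : Fin N → ℂ} (hv : (E σ).mulVec v = 0) : σ.mulVec v = 0 := by
  classical
  have hsa : IsSelfAdjoint (E σ) := condExp_selfAdjoint hE hσ.1
  set ind : ℝ → ℝ := fun t => if t = 0 then 1 else 0 with hind
  set p := cfc ind (E σ) with hpdef
  have hpS : p ∈ S := cfc_mem_sub S (hE.1 σ) ind
  have hpsa : IsSelfAdjoint p := cfc_predicate (R := ℝ) ind (E σ)
  have hpp : p * p = p := cfc_mul_self_of_idem ind fun t => by by_cases h : t = 0 <;> simp [hind, h]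
  have hpv : p.mulVec v = v := by
    have := cfc_mulVec_of_kernel hsa ind hv
    simpa [hind] using this
  have hpE : p * E σ = 0 := by
    have h1 : cfc (fun t : ℝ => ind t * t) (E σ) = p * E σ := by
      rw [cfc_mul ind (fun x => x) (E σ) (myContOn _ _) (myContOn _ _), cfc_id' ℝ (E σ)]
    have h2 : cfc (fun t : ℝ => ind t * t) (E σ) = 0 := by
      have : (fun t : ℝ => ind t * t) = fun _ : ℝ => (0 : ℝ) := by
        funext t; by_cases h : t = 0 <;> simp [hind, h]
      rw [this]
      simpa using cfc_const (0 : ℝ) (E σ) hsa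
    rw [← h1, h2]
  have htr : (p * σ).trace = 0 := by
    rw [hE.2.2 σ p hpS, hpE, Matrix.trace_zero]
  set s := msqrt σ with hsdef
  have hssa : s.conjTranspose = s := cfc_predicate (R := ℝ) Real.sqrt σ
  have hss : s * s = σ := by
    rw [hsdef, msqrt, ← cfc_mul _ _ σ (myContOn _ _) (myContOn _ _)]
    conv_rhs => rw [← cfc_id' ℝ σ (ha := hσ.1)]
    refine cfc_congr fun t ht => ?_
    have : 0 ≤ t := by
      rw [hσ.1.spectrum_real_eq_range_eigenvalues] at ht
      obtain ⟨i, rfl⟩ := ht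
      exact hσ.eigenvalues_nonneg _
    exact Real.mul_self_sqrt this
  have hps : s * p = 0 := by
    apply trace_ct_self_eq_zero
    have hpc : p.conjTranspose = p := hpsa
    have : (s * p).conjTranspose * (s * p) = p * σ * p := by
      rw [Matrix.conjTranspose_mul, hssa, hpc, mul_assoc, ← mul_assoc s s p,
        ← mul_assoc p (s * s) p]
      rw [hss]
    rw [this]
    have : (p * σ * p).trace = (p * σ).trace := by
      rw [Matrix.trace_mul_comm, ← mul_assoc, hpp]
    rw [this, htr]
  have hσp : σ * p = 0 := by
    have : σ * p = s * (s * p) := by rw [← mul_assoc, hss]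
    rw [this, hps, mul_zero]
  calc σ.mulVec v = σ.mulVec (p.mulVec v) := by rw [hpv]
    _ = (σ * p).mulVec v := by rw [← Matrix.mulVec_mulVec]
    _ = 0 := by rw [hσp]; exact Matrix.zero_mulVec v

lemma relEnt_condExp (hE : IsCondExp S E) {σ : Mat N} (hσ : σ.PosSemidef) :
    relEnt σ (E σ) = ((Shat (E σ) - Shat σ : ℝ) : EReal) := by
  classical
  rw [relEnt, if_pos (fun v hv => condExp_kernel hE hσ hv)]
  congr 1
  have hlog : mlog (E σ) ∈ S := cfc_mem_sub S (hE.1 σ) Real.log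
  have key : (σ * mlog (E σ)).trace = (E σ * mlog (E σ)).trace := by
    rw [Matrix.trace_mul_comm σ (mlog (E σ)), Matrix.trace_mul_comm (E σ) (mlog (E σ))]
    exact hE.2.2 σ (mlog (E σ)) hlog
  have expand : tau (σ * (mlog σ - mlog (E σ)))
      = tau (σ * mlog σ) - tau (E σ * mlog (E σ)) := by
    rw [tau, tau, tau, mul_sub, Matrix.trace_sub, key, sub_div]
  rw [expand]
  simp [Shat]
  ring

end CondExp2

theorem stmt7 {N : ℕ} (hN : 0 < N) (AB BC B : StarSubalgebra ℂ (Mat N))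
    (hABf : IsFactorSub AB) (hBCf : IsFactorSub BC) (hBf : IsFactorSub B)
    (EAB EBC EB : Mat N →ₗ[ℂ] Mat N)
    (hsq : CommSquare AB BC B EAB EBC EB)
    (ρ : Mat N) (hρ : IsTauDensity ρ) :
    Shat ρ - Shat (EAB ρ) - Shat (EBC ρ) + Shat (EB ρ) = 0 ↔
      relEnt ρ (EBC ρ) = relEnt (EAB ρ) (EB ρ) := by
  obtain ⟨hAB, hBC, hB, hBeq, h1, h2⟩ := hsq
  have hρpsd := hρ.1
  have e1 : relEnt ρ (EBC ρ) = ((Shat (EBC ρ) - Shat ρ : ℝ) : EReal) :=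
    relEnt_condExp hBC hρpsd
  have hABpsd : (EAB ρ).PosSemidef := condExp_posSemidef hAB hρpsd
  have e2 : relEnt (EAB ρ) (EB ρ) = ((Shat (EB ρ) - Shat (EAB ρ) : ℝ) : EReal) := by
    rw [← h2 ρ]
    have := relEnt_condExp hBC hABpsd
    rw [this, h2 ρ]
  rw [e1, e2, EReal.coe_eq_coe_iff]
  constructor <;> intro h <;> linarith
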